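/- Let a, b, c > 0 and real constants c1, c2. The function u(t,x) = c1·e^{ct} + (a/(2b))·x·(c2 + ((a + 2c)/2)·t - log x) satisfies u_t + a·x²·u_xx + b·x³·(u_xx)² + c·x·u_x - c·u = 0 for x > 0. -/

import Mathlib

theorem stmt15 (a b c c1 c2 : ℝ)
    (ha : 0 < a)
    (hb : 0 < b)
    (hc : 0 < c)
    (u : ℝ → ℝ → ℝ)
    (hu : ∀ t x : ℝ, u t x = c1 * Real.exp (c * t) + (a / (2 * b)) * x * (c2 + ((a + 2 * c) / 2) * t - Real.log x)) :
    ∀ t x : ℝ, 0 < x →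
      deriv (fun s => u s x) t
      + a * x ^ 2 * deriv (fun y => deriv (fun z => u t z) y) x
      + b * x ^ 3 * (deriv (fun y => deriv (fun z => u t z) y) x) ^ 2 + c * x * deriv (fun y => u t y) x - c * u t x = 0 := by
  intro t x hx
  set K : ℝ := a / (2 * b) with hK
  set C : ℝ := c2 + ((a + 2 * c) / 2) * t with hC
  have hxne : x ≠ 0 := ne_of_gt hx
  -- inner derivative in x, at any y > 0
  have hinner : ∀ y : ℝ, 0 < y →
      HasDerivAt (fun z => u t z) (K * (C - Real.log y) - K) y := by
    intro y hy
    have h1 : HasDerivAt (fun z : ℝ => c1 * Real.exp (c * t) + K * z * (C - Real.log z))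
        (K * (C - Real.log y) + (K * y) * (0 - y⁻¹)) y := by
      have hlog : HasDerivAt (fun z : ℝ => C - Real.log z) (0 - y⁻¹) y :=
        (hasDerivAt_const y C).sub (Real.hasDerivAt_log (ne_of_gt hy))
      have hmul : HasDerivAt (fun z : ℝ => K * z) K y := by
        simpa using (hasDerivAt_id y).const_mul K
      simpa using (show HasDerivAt (fun z : ℝ => c1 * Real.exp (c * t) + K * z * (C - Real.log z)) _ y from
        (hasDerivAt_const y (c1 * Real.exp (c * t))).add (hmul.mul hlog))
    have h2 : (fun z : ℝ => u t z) = fun z : ℝ => c1 * Real.exp (c * t) + K * z * (C - Real.log z) := by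
      funext z; rw [hu]
    rw [h2]
    convert h1 using 1
    field_simp
    ring
  -- deriv (fun y => u t y) x
  have hdx : deriv (fun y => u t y) x = K * (C - Real.log x) - K :=
    (hinner x hx).deriv
  -- the function y ↦ deriv (fun z => u t z) y equals K*(C - log y) - K near x
  have heq : (fun y => deriv (fun z => u t z) y) =ᶠ[nhds x] (fun y => K * (C - Real.log y) - K) := by
    filter_upwards [eventually_gt_nhds hx] with y hy
    exact (hinner y hy).deriv
  have houter : HasDerivAt (fun y : ℝ => K * (C - Real.log y) - K) (K * (0 - x⁻¹)) x := by
    have hlog : HasDerivAt (fun y : ℝ => C - Real.log y) (0 - x⁻¹) x :=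
      (hasDerivAt_const x C).sub (Real.hasDerivAt_log hxne)
    simpa using (show HasDerivAt (fun y : ℝ => K * (C - Real.log y) - K) _ x from
      (hlog.const_mul K).sub (hasDerivAt_const x K))
  have hdxx : deriv (fun y => deriv (fun z => u t z) y) x = K * (0 - x⁻¹) := by
    rw [heq.deriv_eq]
    exact houter.deriv
  -- time derivative
  have hdt : deriv (fun s => u s x) t = c1 * (c * Real.exp (c * t)) + K * x * ((a + 2 * c) / 2) := by
    have h2 : (fun s : ℝ => u s x)
        = fun s : ℝ => c1 * Real.exp (c * s) + K * x * (c2 + ((a + 2 * c) / 2) * s - Real.log x) := by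
      funext s; rw [hu]
    rw [h2]
    have hexp : HasDerivAt (fun s : ℝ => c1 * Real.exp (c * s)) (c1 * (c * Real.exp (c * t))) t := by
      have : HasDerivAt (fun s : ℝ => Real.exp (c * s)) (Real.exp (c * t) * c) t := by
        simpa using (show HasDerivAt (fun s : ℝ => Real.exp (c * s)) _ t from
          (Real.hasDerivAt_exp (c * t)).comp t ((hasDerivAt_id t).const_mul c))
      simpa [mul_comm, mul_assoc, mul_left_comm] using this.const_mul c1
    have hlin : HasDerivAt (fun s : ℝ => K * x * (c2 + ((a + 2 * c) / 2) * s - Real.log x))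
        (K * x * ((a + 2 * c) / 2)) t := by
      have : HasDerivAt (fun s : ℝ => c2 + ((a + 2 * c) / 2) * s - Real.log x)
          ((a + 2 * c) / 2) t := by
        simpa using (show HasDerivAt (fun s : ℝ => c2 + ((a + 2 * c) / 2) * s - Real.log x) _ t from
          ((hasDerivAt_const t c2).add ((hasDerivAt_id t).const_mul ((a + 2 * c) / 2))).sub
          (hasDerivAt_const t (Real.log x)))
      simpa using this.const_mul (K * x)
    exact (hexp.add hlin).deriv
  rw [hdx, hdxx, hdt, hu t x, hK]
  field_simp
  ring
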